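/- For every x ∈ {0,1}^ℕ (identified with a point of [0,1]) and every n ∈ ℕ, the Thue–Morse measure satisfies ν(C_n(x)) ≤ 2^{-n} sup_{y ∈ C_n(x)} exp(ψ_n(y)), where C_n(x) is the dyadic interval of length 2^{-n} containing x. -/

import Mathlib

open MeasureTheory

noncomputable def P (n : ℕ) (x : ℝ) : ℝ :=
  ∏ ℓ ∈ Finset.range n, (1 - Real.cos (2 * Real.pi * 2 ^ ℓ * x))

noncomputable def psi (x : ℝ) : ℝ := Real.log (1 - Real.cos (2 * Real.pi * x))

noncomputable def psiSum (n : ℕ) (x : ℝ) : ℝ :=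
  ∑ ℓ ∈ Finset.range n, psi (Int.fract ((2:ℝ) ^ ℓ * x))

lemma factor_nonneg (t : ℝ) : 0 ≤ 1 - Real.cos t := by
  nlinarith [Real.cos_le_one t]

lemma factor_le_two (t : ℝ) : 1 - Real.cos t ≤ 2 := by
  nlinarith [Real.neg_one_le_cos t]

lemma P_nonneg (n : ℕ) (x : ℝ) : 0 ≤ P n x :=
  Finset.prod_nonneg fun _ _ => factor_nonneg _

lemma P_le (n : ℕ) (x : ℝ) : P n x ≤ 2 ^ n := by
  calc P n x ≤ ∏ _ℓ ∈ Finset.range n, (2:ℝ) :=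
        Finset.prod_le_prod (fun _ _ => factor_nonneg _) (fun _ _ => factor_le_two _)
    _ = 2 ^ n := by simp

lemma P_cont (n : ℕ) : Continuous (P n) := by
  unfold P
  exact continuous_finset_prod _ fun ℓ _ => by fun_prop

lemma P_periodic (n : ℕ) : Function.Periodic (P n) 1 := by
  intro x
  unfold P
  refine Finset.prod_congr rfl fun ℓ _ => ?_
  have h : 2 * Real.pi * 2 ^ ℓ * (x + 1)
      = 2 * Real.pi * 2 ^ ℓ * x + ((2:ℤ) ^ ℓ : ℤ) * (2 * Real.pi) := by
    push_cast; ring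
  rw [h, Real.cos_add_int_mul_two_pi]

lemma P_succ' (n : ℕ) (x : ℝ) :
    P (n + 1) x = (1 - Real.cos (2 * Real.pi * x)) * P n (2 * x) := by
  unfold P
  rw [Finset.prod_range_succ']
  have h : ∀ i : ℕ, 2 * Real.pi * 2 ^ (i + 1) * x = 2 * Real.pi * 2 ^ i * (2 * x) := by
    intro i; rw [pow_succ]; ring
  simp only [h, pow_zero, mul_one]
  ring

lemma P_split (m k : ℕ) (x : ℝ) : P (m + k) x = P m x * P k (2 ^ m * x) := by
  unfold P
  rw [Finset.prod_range_add]
  congr 1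
  refine Finset.prod_congr rfl fun i _ => ?_
  have h : 2 * Real.pi * 2 ^ (m + i) * x = 2 * Real.pi * 2 ^ i * (2 ^ m * x) := by
    rw [pow_add]; ring
  rw [h]

lemma P_intervalIntegrable (n : ℕ) (a b : ℝ) : IntervalIntegrable (P n) volume a b :=
  (P_cont n).intervalIntegrable a b

lemma P_integral_one : ∀ M : ℕ, ∫ x in (0:ℝ)..1, P M x = 1 := by
  intro M
  induction M with
  | zero => simp [P]
  | succ M ih =>
    have hg : Continuous fun u => (1 - Real.cos (Real.pi * u)) * P M u := by
      have := P_cont M; fun_prop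
    have h1 : ∫ x in (0:ℝ)..1, P (M+1) x
        = ∫ x in (0:ℝ)..1, (fun u => (1 - Real.cos (Real.pi * u)) * P M u) (2 * x) := by
      refine intervalIntegral.integral_congr fun x _ => ?_
      simp only [P_succ']
      norm_num [show Real.pi * (2 * x) = 2 * Real.pi * x by ring]
    have h2 : ∫ x in (0:ℝ)..1, (fun u => (1 - Real.cos (Real.pi * u)) * P M u) (2 * x)
        = (2:ℝ)⁻¹ • ∫ u in (2*(0:ℝ))..(2*1), (1 - Real.cos (Real.pi * u)) * P M u := by
      exact intervalIntegral.integral_comp_mul_left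
        (fun u => (1 - Real.cos (Real.pi * u)) * P M u) two_ne_zero
    have h3 : ∫ u in (0:ℝ)..2, (1 - Real.cos (Real.pi * u)) * P M u
        = (∫ u in (0:ℝ)..1, (1 - Real.cos (Real.pi * u)) * P M u)
          + ∫ u in (1:ℝ)..2, (1 - Real.cos (Real.pi * u)) * P M u := by
      rw [intervalIntegral.integral_add_adjacent_intervals
        (hg.intervalIntegrable 0 1) (hg.intervalIntegrable 1 2)]
    have h4 : ∫ u in (1:ℝ)..2, (1 - Real.cos (Real.pi * u)) * P M u
        = ∫ u in (0:ℝ)..1, (1 + Real.cos (Real.pi * u)) * P M u := by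
      have := intervalIntegral.integral_comp_add_right
        (a := (0:ℝ)) (b := 1) (f := fun u => (1 - Real.cos (Real.pi * u)) * P M u) 1
      rw [zero_add] at this
      rw [show (2:ℝ) = 1 + 1 by norm_num, ← this]
      refine intervalIntegral.integral_congr fun u _ => ?_
      have hc : Real.cos (Real.pi * (u + 1)) = - Real.cos (Real.pi * u) := by
        rw [show Real.pi * (u + 1) = Real.pi * u + Real.pi by ring, Real.cos_add_pi]
      rw [hc, P_periodic]
      ring
    have hg2 : Continuous fun u => (1 + Real.cos (Real.pi * u)) * P M u := by
      have := P_cont M; fun_prop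
    have h5 : (∫ u in (0:ℝ)..1, (1 - Real.cos (Real.pi * u)) * P M u)
          + ∫ u in (0:ℝ)..1, (1 + Real.cos (Real.pi * u)) * P M u
        = ∫ u in (0:ℝ)..1, 2 * P M u := by
      rw [← intervalIntegral.integral_add (hg.intervalIntegrable 0 1)
        (hg2.intervalIntegrable 0 1)]
      refine intervalIntegral.integral_congr fun u _ => ?_
      ring
    rw [h1, h2]
    rw [show (2*(0:ℝ)) = 0 by norm_num, show (2*(1:ℝ)) = 2 by norm_num, h3, h4, h5,
      intervalIntegral.integral_const_mul, ih]
    norm_num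

lemma P_integral_unit (M : ℕ) (c : ℝ) : ∫ x in c..(c+1), P M x = 1 := by
  rw [(P_periodic M).intervalIntegral_add_eq c 0, zero_add, P_integral_one]

lemma P_integral_le_one (M : ℕ) {c d : ℝ} (h1 : c ≤ d) (h2 : d ≤ c + 1) :
    ∫ x in c..d, P M x ≤ 1 := by
  rw [← P_integral_unit M c]
  exact intervalIntegral.integral_mono_interval le_rfl h1 h2
    (Filter.Eventually.of_forall fun x => P_nonneg M x) (P_intervalIntegrable M c (c+1))
lemma one_sub_cos_le (u : ℝ) : 1 - Real.cos (2 * Real.pi * u) ≤ 2 * Real.pi ^ 2 * u ^ 2 := by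
  have h1 : Real.cos (Real.pi * u) ^ 2 = 1 / 2 + Real.cos (2 * (Real.pi * u)) / 2 :=
    Real.cos_sq (Real.pi * u)
  have h2 : Real.sin (Real.pi * u) ^ 2 + Real.cos (Real.pi * u) ^ 2 = 1 :=
    Real.sin_sq_add_cos_sq _
  have h3 : Real.sin (Real.pi * u) ^ 2 ≤ (Real.pi * u) ^ 2 := by
    have := Real.abs_sin_le_abs (x := Real.pi * u)
    calc Real.sin (Real.pi * u) ^ 2 = |Real.sin (Real.pi * u)| ^ 2 := (sq_abs _).symm
      _ ≤ |Real.pi * u| ^ 2 := by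
          exact pow_le_pow_left₀ (abs_nonneg _) this 2
      _ = (Real.pi * u) ^ 2 := sq_abs _
  rw [show 2 * (Real.pi * u) = 2 * Real.pi * u by ring] at h1
  nlinarith [h1, h2, h3, mul_pow Real.pi u 2]

lemma P_tail {M : ℕ} (hM : 1 ≤ M) {γ : ℝ} (hγ : 0 < γ) (hγ4 : γ ≤ 1/4) :
    ∫ u in (-γ)..γ, P M u ≤ Real.pi ^ 2 * γ ^ 2 := by
  obtain ⟨K, rfl⟩ : ∃ K, M = K + 1 := ⟨M - 1, by omega⟩
  have hc : Continuous fun u => P K (2 * u) := by have := P_cont K; fun_prop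
  have step1 : ∫ u in (-γ)..γ, P (K+1) u
      ≤ ∫ u in (-γ)..γ, (2 * Real.pi ^ 2 * γ ^ 2) * P K (2 * u) := by
    refine intervalIntegral.integral_mono_on (by linarith) (P_intervalIntegrable _ _ _)
      (Continuous.intervalIntegrable (by fun_prop) _ _) ?_
    intro u hu
    rw [P_succ']
    have h1 : 1 - Real.cos (2 * Real.pi * u) ≤ 2 * Real.pi ^ 2 * γ ^ 2 := by
      refine (one_sub_cos_le u).trans ?_
      have : u ^ 2 ≤ γ ^ 2 := by
        rw [← sq_abs u, ← sq_abs γ]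
        apply pow_le_pow_left₀ (abs_nonneg _)
        rw [abs_of_pos hγ]
        exact abs_le.2 ⟨hu.1, hu.2⟩
      nlinarith [Real.pi_pos]
    exact mul_le_mul_of_nonneg_right h1 (P_nonneg _ _)
  have step2 : ∫ u in (-γ)..γ, P K (2 * u) ≤ 1/2 := by
    rw [intervalIntegral.integral_comp_mul_left (P K) two_ne_zero]
    have : ∫ x in (2*(-γ))..(2*γ), P K x ≤ 1 :=
      P_integral_le_one K (by linarith) (by linarith)
    have h0 : (0:ℝ) ≤ ∫ x in (2*(-γ))..(2*γ), P K x := by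
      refine intervalIntegral.integral_nonneg (by linarith) fun u _ => P_nonneg _ _
    rw [smul_eq_mul]
    linarith
  calc ∫ u in (-γ)..γ, P (K+1) u
      ≤ ∫ u in (-γ)..γ, (2 * Real.pi ^ 2 * γ ^ 2) * P K (2 * u) := step1
    _ = (2 * Real.pi ^ 2 * γ ^ 2) * ∫ u in (-γ)..γ, P K (2 * u) := by
        rw [intervalIntegral.integral_const_mul]
    _ ≤ (2 * Real.pi ^ 2 * γ ^ 2) * (1/2) := by
        refine mul_le_mul_of_nonneg_left step2 (by positivity)
    _ = Real.pi ^ 2 * γ ^ 2 := by ring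

lemma P_le_exp_psiSum (n : ℕ) (y : ℝ) : P n y ≤ Real.exp (psiSum n y) := by
  rw [psiSum, Real.exp_sum]
  refine Finset.prod_le_prod (fun _ _ => factor_nonneg _) fun ℓ _ => ?_
  have h : psi (Int.fract ((2:ℝ) ^ ℓ * y)) = Real.log (1 - Real.cos (2 * Real.pi * 2 ^ ℓ * y)) := by
    unfold psi
    congr 1
    rw [Int.fract]
    have : 2 * Real.pi * ((2:ℝ) ^ ℓ * y - ⌊(2:ℝ) ^ ℓ * y⌋)
        = 2 * Real.pi * 2 ^ ℓ * y - (⌊(2:ℝ) ^ ℓ * y⌋ : ℤ) * (2 * Real.pi) := by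
      push_cast; ring
    rw [this, Real.cos_sub_int_mul_two_pi]
  rw [h]
  exact Real.le_exp_log _

lemma exp_psi_le_two (t : ℝ) : Real.exp (psi t) ≤ 2 := by
  unfold psi
  rcases eq_or_lt_of_le (factor_nonneg (2 * Real.pi * t)) with h | h
  · rw [← h, Real.log_zero, Real.exp_zero]; norm_num
  · rw [Real.exp_log h]
    exact factor_le_two _

lemma exp_psiSum_le (n : ℕ) (y : ℝ) : Real.exp (psiSum n y) ≤ 2 ^ n := by
  rw [psiSum, Real.exp_sum]
  calc (∏ ℓ ∈ Finset.range n, Real.exp (psi (Int.fract ((2:ℝ) ^ ℓ * y))))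
      ≤ ∏ _ℓ ∈ Finset.range n, (2:ℝ) :=
        Finset.prod_le_prod (fun _ _ => (Real.exp_pos _).le) (fun _ _ => exp_psi_le_two _)
    _ = 2 ^ n := by simp
noncomputable def trap (c d δ y : ℝ) : ℝ :=
  max 0 (min 1 (min ((y - (c - δ)) / δ) ((d + δ - y) / δ)))

lemma trap_cont (c d δ : ℝ) : Continuous (trap c d δ) := by
  unfold trap; fun_prop

lemma trap_nonneg (c d δ y : ℝ) : 0 ≤ trap c d δ y := le_max_left _ _

lemma trap_le_one (c d δ y : ℝ) : trap c d δ y ≤ 1 :=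
  max_le zero_le_one (min_le_left _ _)

lemma trap_eq_one {c d δ y : ℝ} (hδ : 0 < δ) (h : y ∈ Set.Icc c d) : trap c d δ y = 1 := by
  unfold trap
  have h1 : (1:ℝ) ≤ (y - (c - δ)) / δ := by
    rw [le_div_iff₀ hδ]; have := h.1; linarith
  have h2 : (1:ℝ) ≤ (d + δ - y) / δ := by
    rw [le_div_iff₀ hδ]; have := h.2; linarith
  rw [min_eq_left (le_min h1 h2), max_eq_right zero_le_one]

lemma trap_eq_zero {c d δ y : ℝ} (hδ : 0 < δ) (h : y ∉ Set.Ioo (c - δ) (d + δ)) :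
    trap c d δ y = 0 := by
  unfold trap
  rw [Set.mem_Ioo, not_and_or, not_lt, not_lt] at h
  have hm : min ((y - (c - δ)) / δ) ((d + δ - y) / δ) ≤ 0 := by
    rcases h with h | h
    · exact le_trans (min_le_left _ _) (div_nonpos_iff.2 (Or.inr ⟨by linarith, hδ.le⟩))
    · exact le_trans (min_le_right _ _) (div_nonpos_iff.2 (Or.inr ⟨by linarith, hδ.le⟩))
  rw [max_eq_left (le_trans (min_le_right _ _) hm)]

lemma trap_hcs {c d δ : ℝ} (hδ : 0 < δ) : HasCompactSupport (trap c d δ) := by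
  apply HasCompactSupport.intro (isCompact_Icc (a := c - δ) (b := d + δ))
  intro y hy
  refine trap_eq_zero hδ fun hy' => hy ?_
  exact ⟨hy'.1.le, hy'.2.le⟩

lemma meas_le_integral (ν : Measure ℝ) [IsProbabilityMeasure ν] {c d δ : ℝ} (hδ : 0 < δ) :
    (ν (Set.Icc c d)).toReal ≤ ∫ y, trap c d δ y ∂ν := by
  rw [← measureReal_def, ← MeasureTheory.integral_indicator_one measurableSet_Icc]
  refine integral_mono ((integrable_const (1:ℝ)).indicator measurableSet_Icc)
    ((trap_cont c d δ).integrable_of_hasCompactSupport (trap_hcs hδ)) ?_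
  intro y
  by_cases hy : y ∈ Set.Icc c d
  · rw [Set.indicator_of_mem hy, trap_eq_one hδ hy]; exact le_rfl
  · rw [Set.indicator_of_notMem hy]; exact trap_nonneg _ _ _ _

lemma int1 {g h : ℝ → ℝ} (hgc : Continuous g) (hhc : Continuous h)
    (hg0 : ∀ y, 0 ≤ g y) (hgh : ∀ y, g y ≤ h y) {u v : ℝ} (huv : u ≤ v)
    (hout : ∀ y, y ∉ Set.Ioo u v → g y = 0) :
    ∫ x in (0:ℝ)..1, g x ≤ ∫ x in u..v, h x := by
  have hu' : min u 0 ≤ u := min_le_left _ _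
  have hv' : v ≤ max v 1 := le_max_left _ _
  have i1 : ∫ x in (0:ℝ)..1, g x ≤ ∫ x in (min u 0)..(max v 1), g x := by
    refine intervalIntegral.integral_mono_interval (min_le_right _ _) zero_le_one
      (le_max_right _ _) (Filter.Eventually.of_forall hg0) (hgc.intervalIntegrable _ _)
  have z1 : ∫ x in (min u 0)..u, g x = 0 := by
    rw [intervalIntegral.integral_congr (g := fun _ => (0:ℝ)) ?_, intervalIntegral.integral_zero]
    intro y hy
    rw [Set.uIcc_of_le hu'] at hy
    exact hout y (fun hy' => absurd hy.2 (not_le.2 hy'.1))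
  have z2 : ∫ x in v..(max v 1), g x = 0 := by
    rw [intervalIntegral.integral_congr (g := fun _ => (0:ℝ)) ?_, intervalIntegral.integral_zero]
    intro y hy
    rw [Set.uIcc_of_le hv'] at hy
    exact hout y (fun hy' => absurd hy'.2 (not_lt.2 hy.1))
  have s1 : ∫ x in (min u 0)..v, g x = (∫ x in (min u 0)..u, g x) + ∫ x in u..v, g x :=
    (intervalIntegral.integral_add_adjacent_intervals (hgc.intervalIntegrable _ _)
      (hgc.intervalIntegrable _ _)).symm
  have s2 : ∫ x in (min u 0)..(max v 1), g x
      = (∫ x in (min u 0)..v, g x) + ∫ x in v..(max v 1), g x :=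
    (intervalIntegral.integral_add_adjacent_intervals (hgc.intervalIntegrable _ _)
      (hgc.intervalIntegrable _ _)).symm
  have i2 : ∫ x in u..v, g x ≤ ∫ x in u..v, h x :=
    intervalIntegral.integral_mono_on huv (hgc.intervalIntegrable _ _)
      (hhc.intervalIntegrable _ _) (fun x _ => hgh x)
  calc ∫ x in (0:ℝ)..1, g x ≤ ∫ x in (min u 0)..(max v 1), g x := i1
    _ = ∫ x in u..v, g x := by rw [s2, s1, z1, z2]; ring
    _ ≤ ∫ x in u..v, h x := i2
lemma atom_zero (ν : Measure ℝ) [IsProbabilityMeasure ν]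
    (hν : ∀ f : ℝ → ℝ, Continuous f →
      Filter.Tendsto (fun N => ∫ x in (0:ℝ)..1, f x * P N x) Filter.atTop
        (nhds (∫ x, f x ∂ν)))
    (n : ℕ) (j : ℤ) : ν {((j:ℝ) / 2 ^ n)} = 0 := by
  set p : ℝ := (j:ℝ) / 2 ^ n with hp
  have h2n : (0:ℝ) < 2 ^ n := by positivity
  have key : ∀ ε > 0, (ν {p}).toReal ≤ ε := by
    intro ε hε
    set γ : ℝ := min (1/4) (Real.sqrt ε / Real.pi) with hγdef
    have hγpos : 0 < γ := lt_min (by norm_num) (div_pos (Real.sqrt_pos.2 hε) Real.pi_pos)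
    have hγ4 : γ ≤ 1/4 := min_le_left _ _
    have hγε : Real.pi ^ 2 * γ ^ 2 ≤ ε := by
      have h1 : γ ≤ Real.sqrt ε / Real.pi := min_le_right _ _
      have h2 : γ * Real.pi ≤ Real.sqrt ε := by
        rw [← le_div_iff₀ Real.pi_pos]
        exact h1
      have h3 : (γ * Real.pi) ^ 2 ≤ Real.sqrt ε ^ 2 :=
        pow_le_pow_left₀ (by positivity) h2 2
      rw [Real.sq_sqrt hε.le] at h3
      nlinarith
    set δ : ℝ := γ / 2 ^ (n + 1) with hδdef
    have hδpos : 0 < δ := by positivity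
    set c : ℝ := p - δ with hc
    set d : ℝ := p + δ with hd
    have hbound : ∀ N ≥ n + 1, ∫ x in (0:ℝ)..1, trap c d δ x * P N x ≤ Real.pi ^ 2 * γ ^ 2 := by
      intro N hN
      obtain ⟨m, rfl⟩ : ∃ m, N = n + m := ⟨N - n, by omega⟩
      have hm : 1 ≤ m := by omega
      have hPm := P_cont (n := m)
      have hPN := P_cont (n := n + m)
      have step1 : ∫ x in (0:ℝ)..1, trap c d δ x * P (n + m) x
          ≤ ∫ x in (c - δ)..(d + δ), (2:ℝ) ^ n * P m (2 ^ n * x) := by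
        refine int1 (by have := trap_cont c d δ; fun_prop) (by fun_prop)
          (fun y => mul_nonneg (trap_nonneg _ _ _ _) (P_nonneg _ _)) ?_ (by linarith) ?_
        · intro y
          calc trap c d δ y * P (n + m) y ≤ 1 * P (n + m) y :=
              mul_le_mul_of_nonneg_right (trap_le_one _ _ _ _) (P_nonneg _ _)
            _ = P n y * P m (2 ^ n * y) := by rw [one_mul, P_split]
            _ ≤ 2 ^ n * P m (2 ^ n * y) :=
              mul_le_mul_of_nonneg_right (P_le n y) (P_nonneg _ _)
        · intro y hy
          exact mul_eq_zero_of_left (trap_eq_zero hδpos hy) _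
      have step2 : ∫ x in (c - δ)..(d + δ), (2:ℝ) ^ n * P m (2 ^ n * x)
          = ∫ u in (-γ + (j:ℝ))..(γ + (j:ℝ)), P m u := by
        rw [intervalIntegral.integral_const_mul,
          intervalIntegral.integral_comp_mul_left (P m) (ne_of_gt h2n)]
        rw [smul_eq_mul, ← mul_assoc, mul_inv_cancel₀ (ne_of_gt h2n), one_mul]
        congr 1
        · rw [hc, hp, hδdef]; field_simp; ring
        · rw [hd, hp, hδdef]; field_simp; ring
      have step3 : ∫ u in (-γ + (j:ℝ))..(γ + (j:ℝ)), P m u = ∫ u in (-γ)..γ, P m u := by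
        rw [← intervalIntegral.integral_comp_add_right (a := -γ) (b := γ) (f := P m) (j:ℝ)]
        refine intervalIntegral.integral_congr fun u _ => ?_
        have := ((P_periodic m).int_mul j) u
        rwa [mul_one] at this
      calc ∫ x in (0:ℝ)..1, trap c d δ x * P (n + m) x
          ≤ ∫ x in (c - δ)..(d + δ), (2:ℝ) ^ n * P m (2 ^ n * x) := step1
        _ = ∫ u in (-γ)..γ, P m u := by rw [step2, step3]
        _ ≤ Real.pi ^ 2 * γ ^ 2 := P_tail hm hγpos hγ4
    have hlim : ∫ y, trap c d δ y ∂ν ≤ Real.pi ^ 2 * γ ^ 2 :=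
      le_of_tendsto (hν (trap c d δ) (trap_cont c d δ))
        (Filter.eventually_atTop.2 ⟨n + 1, hbound⟩)
    calc (ν {p}).toReal ≤ (ν (Set.Icc c d)).toReal := by
          refine ENNReal.toReal_mono (measure_ne_top ν _) (measure_mono ?_)
          intro y hy
          rw [Set.mem_singleton_iff] at hy
          exact hy ▸ ⟨by rw [hc]; linarith, by rw [hd]; linarith⟩
      _ ≤ ∫ y, trap c d δ y ∂ν := meas_le_integral ν hδpos
      _ ≤ Real.pi ^ 2 * γ ^ 2 := hlim
      _ ≤ ε := hγε
  have h0 : (ν {p}).toReal = 0 := by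
    by_contra hcon
    have hpos : 0 < (ν {p}).toReal :=
      lt_of_le_of_ne ENNReal.toReal_nonneg (Ne.symm hcon)
    have := key ((ν {p}).toReal / 2) (by linarith)
    linarith
  rcases (ENNReal.toReal_eq_zero_iff _).1 h0 with h | h
  · exact h
  · exact absurd h (measure_ne_top ν _)
theorem nu_cylinder_upper_bound (ν : Measure ℝ) [IsProbabilityMeasure ν]
    (hsupp : ν (Set.Icc (0:ℝ) 1)ᶜ = 0)
    (hν : ∀ f : ℝ → ℝ, Continuous f →
      Filter.Tendsto (fun N => ∫ x in (0:ℝ)..1, f x * P N x) Filter.atTop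
        (nhds (∫ x, f x ∂ν))) :
    ∀ n : ℕ, ∀ x ∈ Set.Icc (0:ℝ) 1,
      (ν (Set.Icc ((⌊(2:ℝ)^n * x⌋ : ℝ) / 2^n) ((⌊(2:ℝ)^n * x⌋ + 1 : ℝ) / 2^n))).toReal ≤
        (1/2)^n * sSup ((fun y => Real.exp (psiSum n y)) ''
          Set.Icc ((⌊(2:ℝ)^n * x⌋ : ℝ) / 2^n) ((⌊(2:ℝ)^n * x⌋ + 1 : ℝ) / 2^n)) := by
  intro n x hx
  set k : ℤ := ⌊(2:ℝ)^n * x⌋ with hk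
  have h2n : (0:ℝ) < 2^n := by positivity
  set a : ℝ := (k:ℝ)/2^n with ha
  set b : ℝ := ((k:ℝ)+1)/2^n with hb
  set C := Set.Icc a b with hC
  set M := sSup ((fun y => Real.exp (psiSum n y)) '' C) with hM
  have hab : a < b := by
    rw [ha, hb, div_lt_div_iff₀ h2n h2n]
    nlinarith
  have hBdd : BddAbove ((fun y => Real.exp (psiSum n y)) '' C) := by
    refine ⟨2^n, ?_⟩
    rintro _ ⟨y, _, rfl⟩
    exact exp_psiSum_le n y
  have hMem : ∀ y ∈ C, Real.exp (psiSum n y) ≤ M := fun y hy =>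
    le_csSup hBdd ⟨y, hy, rfl⟩
  have hPM : ∀ y ∈ C, P n y ≤ M := fun y hy => (P_le_exp_psiSum n y).trans (hMem y hy)
  have hMpos : 0 < M := lt_of_lt_of_le (Real.exp_pos _) (hMem a ⟨le_refl a, hab.le⟩)
  set R : ℝ := (1/2:ℝ)^n * M with hR
  have hRpos : 0 < R := by positivity
  -- bound for closed subintervals strictly inside (a, b)
  have subint : ∀ c d δ : ℝ, 0 < δ → c ≤ d → a < c - δ → d + δ < b →
      (ν (Set.Icc c d)).toReal ≤ R := by
    intro c d δ hδ hcd hac hdb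
    have hbound : ∀ N ≥ n, ∫ y in (0:ℝ)..1, trap c d δ y * P N y ≤ R := by
      intro N hN
      obtain ⟨m, rfl⟩ : ∃ m, N = n + m := ⟨N - n, by omega⟩
      have hPm := P_cont (n := m)
      have hPN := P_cont (n := n + m)
      have hsub1 : ∀ y, y ∉ Set.Ioo a b → trap c d δ y = 0 := by
        intro y hy
        refine trap_eq_zero hδ fun hy' => hy ⟨?_, ?_⟩
        · linarith [hy'.1]
        · linarith [hy'.2]
      have step1 : ∫ y in (0:ℝ)..1, trap c d δ y * P (n + m) y
          ≤ ∫ y in a..b, M * P m (2 ^ n * y) := by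
        refine int1 (by have := trap_cont c d δ; fun_prop) (by fun_prop)
          (fun y => mul_nonneg (trap_nonneg _ _ _ _) (P_nonneg _ _)) ?_ hab.le
          (fun y hy => mul_eq_zero_of_left (hsub1 y hy) _)
        intro y
        by_cases hy : y ∈ C
        · calc trap c d δ y * P (n + m) y ≤ 1 * P (n + m) y :=
              mul_le_mul_of_nonneg_right (trap_le_one _ _ _ _) (P_nonneg _ _)
            _ = P n y * P m (2 ^ n * y) := by rw [one_mul, P_split]
            _ ≤ M * P m (2 ^ n * y) :=
              mul_le_mul_of_nonneg_right (hPM y hy) (P_nonneg _ _)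
        · have hy' : y ∉ Set.Ioo a b := fun hy' => hy ⟨hy'.1.le, hy'.2.le⟩
          rw [mul_eq_zero_of_left (hsub1 y hy') _]
          exact mul_nonneg hMpos.le (P_nonneg _ _)
      have step2 : ∫ y in a..b, M * P m (2 ^ n * y) = R := by
        rw [intervalIntegral.integral_const_mul,
          intervalIntegral.integral_comp_mul_left (P m) (ne_of_gt h2n)]
        rw [show (2:ℝ)^n * a = (k:ℝ) by rw [ha]; field_simp,
          show (2:ℝ)^n * b = (k:ℝ) + 1 by rw [hb]; field_simp]
        rw [P_integral_unit m (k:ℝ), smul_eq_mul, mul_one, hR]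
        rw [one_div, inv_pow]
        ring
      rw [← step2]
      exact step1
    calc (ν (Set.Icc c d)).toReal ≤ ∫ y, trap c d δ y ∂ν := meas_le_integral ν hδ
      _ ≤ R := le_of_tendsto (hν (trap c d δ) (trap_cont c d δ))
          (Filter.eventually_atTop.2 ⟨n, hbound⟩)
  -- the open interval bound via a monotone union
  have hIoo : ν (Set.Ioo a b) ≤ ENNReal.ofReal R := by
    set S : ℕ → Set ℝ := fun m => Set.Icc (a + (b-a)/(m+3)) (b - (b-a)/(m+3)) with hS
    have hwpos : ∀ m : ℕ, 0 < (b-a)/((m:ℝ)+3) := by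
      intro m
      apply div_pos (by linarith)
      positivity
    have hmono : Monotone S := by
      intro m m' hmm'
      have hw : (b-a)/((m':ℝ)+3) ≤ (b-a)/((m:ℝ)+3) := by
        apply div_le_div_of_nonneg_left (by linarith) (by positivity)
        exact_mod_cast by omega
      exact Set.Icc_subset_Icc (by linarith) (by linarith)
    have hunion : (⋃ m, S m) = Set.Ioo a b := by
      ext y
      simp only [Set.mem_iUnion, hS, Set.mem_Icc, Set.mem_Ioo]
      constructor
      · rintro ⟨m, h1, h2⟩
        have := hwpos m
        exact ⟨by linarith, by linarith⟩
      · rintro ⟨h1, h2⟩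
        obtain ⟨m, hm⟩ := exists_nat_ge ((b-a) / min (y-a) (b-y))
        refine ⟨m, ?_, ?_⟩
        · have hminpos : 0 < min (y-a) (b-y) := lt_min (by linarith) (by linarith)
          have h3 : (b-a) / min (y-a) (b-y) ≤ (m:ℝ) + 3 := by
            calc (b-a) / min (y-a) (b-y) ≤ (m:ℝ) := hm
              _ ≤ (m:ℝ) + 3 := by linarith
          have h4 : (b-a) ≤ ((m:ℝ)+3) * min (y-a) (b-y) := by
            rw [div_le_iff₀ hminpos] at h3
            linarith
          have h5 : (b-a)/((m:ℝ)+3) ≤ min (y-a) (b-y) := by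
            rw [div_le_iff₀ (by positivity)]
            linarith [h4]
          have := min_le_left (y-a) (b-y)
          linarith
        · have hminpos : 0 < min (y-a) (b-y) := lt_min (by linarith) (by linarith)
          have h3 : (b-a) / min (y-a) (b-y) ≤ (m:ℝ) + 3 := by
            calc (b-a) / min (y-a) (b-y) ≤ (m:ℝ) := hm
              _ ≤ (m:ℝ) + 3 := by linarith
          have h4 : (b-a) ≤ ((m:ℝ)+3) * min (y-a) (b-y) := by
            rw [div_le_iff₀ hminpos] at h3
            linarith
          have h5 : (b-a)/((m:ℝ)+3) ≤ min (y-a) (b-y) := by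
            rw [div_le_iff₀ (by positivity)]
            linarith [h4]
          have := min_le_right (y-a) (b-y)
          linarith
    have heach : ∀ m : ℕ, ν (S m) ≤ ENNReal.ofReal R := by
      intro m
      have hw := hwpos m
      set w : ℝ := (b-a)/((m:ℝ)+3) with hwdef
      have hw3 : w ≤ (b-a)/3 := by
        rw [hwdef]
        apply div_le_div_of_nonneg_left (by linarith) (by norm_num)
        · linarith [Nat.cast_nonneg (α := ℝ) m]
      have hval : (ν (S m)).toReal ≤ R := by
        refine subint (a + w) (b - w) (w/2) (by linarith) (by linarith) (by linarith)
          (by linarith)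
      calc ν (S m) = ENNReal.ofReal (ν (S m)).toReal :=
            (ENNReal.ofReal_toReal (measure_ne_top ν _)).symm
        _ ≤ ENNReal.ofReal R := ENNReal.ofReal_le_ofReal hval
    rw [← hunion]
    exact le_of_tendsto (tendsto_measure_iUnion_atTop hmono)
      (Filter.Eventually.of_forall heach)
  -- atoms
  have hA : ν {a} = 0 := atom_zero ν hν n k
  have hB : ν {b} = 0 := by
    have := atom_zero ν hν n (k+1)
    have hcast : (((k+1 : ℤ)):ℝ) / 2^n = b := by push_cast [hb]; ring
    rwa [hcast] at this
  have hsub : C ⊆ {a} ∪ (Set.Ioo a b ∪ {b}) := by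
    intro y hy
    rcases eq_or_lt_of_le hy.1 with h1 | h1
    · exact Or.inl (by simp [← h1])
    rcases eq_or_lt_of_le hy.2 with h2 | h2
    · exact Or.inr (Or.inr (by simp [h2]))
    · exact Or.inr (Or.inl ⟨h1, h2⟩)
  have hνC : ν C ≤ ENNReal.ofReal R := by
    calc ν C ≤ ν ({a} ∪ (Set.Ioo a b ∪ {b})) := measure_mono hsub
      _ ≤ ν {a} + ν (Set.Ioo a b ∪ {b}) := measure_union_le _ _
      _ ≤ ν {a} + (ν (Set.Ioo a b) + ν {b}) := by
          exact add_le_add_right (measure_union_le _ _) _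
      _ = ν (Set.Ioo a b) := by rw [hA, hB]; simp
      _ ≤ ENNReal.ofReal R := hIoo
  calc (ν C).toReal ≤ (ENNReal.ofReal R).toReal :=
        ENNReal.toReal_mono ENNReal.ofReal_ne_top hνC
    _ = R := ENNReal.toReal_ofReal hRpos.le
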